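/- arXiv:0808.2943 — 2 statements merged into one kernel-verified Lean document; each statement's English description precedes it below -/
import Mathlib

section
/- For every odd l and every a ∈ ℕ, and for every m ≥ 1, ν₂(C_{2^a·l, m}) = ν₂(C_{l,m}) + 3l·(2^a − 1), where C_{l,m} = A_{l, l + (m−1)·2^{1+ν₂(l)}}. -/
open Finset

/-- The 2-adic valuation of `A_{l,n}`, given by `ν₂(A_{l,n}) = l + Σ_{j=-l+1}^{l} ν₂(n+j)`. -/
noncomputable def nuA (l : ℕ) (n : ℤ) : ℕ :=
  l + ∑ j ∈ Finset.Icc (-(l : ℤ) + 1) (l : ℤ), padicValInt 2 (n + j)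

/-- The 2-adic valuation of `C_{l,m} = A_{l, l + (m-1)·2^(1+ν₂(l))}`. -/
noncomputable def nuC (l m : ℕ) : ℕ :=
  nuA l ((l : ℤ) + ((m : ℤ) - 1) * 2 ^ (1 + padicValNat 2 l))

lemma s2_two_mul (x : ℕ) : (Nat.digits 2 (2 * x)).sum = (Nat.digits 2 x).sum := by
  rcases Nat.eq_zero_or_pos x with rfl | hx
  · simp
  · rw [Nat.digits_def' (by norm_num : (1:ℕ) < 2) (by omega)]
    simp [Nat.mul_div_cancel_left x (by norm_num : 0 < 2), Nat.mul_mod_right]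

lemma s2_pow_mul (c x : ℕ) : (Nat.digits 2 (2 ^ c * x)).sum = (Nat.digits 2 x).sum := by
  induction c with
  | zero => simp
  | succ n ih => rw [pow_succ, mul_comm (2^n) 2, mul_assoc, s2_two_mul, ih]

lemma nu_fact (n : ℕ) : padicValNat 2 (Nat.factorial n) + (Nat.digits 2 n).sum = n := by
  have h := sub_one_mul_padicValNat_factorial (p := 2) n
  have h2 := Nat.digit_sum_le 2 n
  omega

lemma sum_Ioc (x y : ℕ) (h : x ≤ y) :
    ∑ k ∈ Ioc x y, padicValNat 2 k + padicValNat 2 (Nat.factorial x) = padicValNat 2 (Nat.factorial y) := by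
  induction y, h using Nat.le_induction with
  | base => simp
  | succ y hy ih =>
    rw [Finset.sum_Ioc_succ_top (by omega : x ≤ y), Nat.factorial_succ,
      padicValNat.mul (by omega) (Nat.factorial_ne_zero y)]
    omega

lemma sumIcc (n L : ℕ) (hL : L ≤ n) :
    ∑ j ∈ Icc (-(L : ℤ) + 1) (L : ℤ), padicValInt 2 ((n : ℤ) + j)
      = ∑ k ∈ Ioc (n - L) (n + L), padicValNat 2 k := by
  refine Finset.sum_nbij' (fun j => ((n : ℤ) + j).toNat) (fun k => (k : ℤ) - (n : ℤ)) ?_ ?_ ?_ ?_ ?_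
  · intro j hj
    simp only [Finset.mem_Icc] at hj
    simp only [Finset.mem_Ioc]
    omega
  · intro k hk
    simp only [Finset.mem_Ioc] at hk
    simp only [Finset.mem_Icc]
    omega
  · intro j hj
    simp only [Finset.mem_Icc] at hj
    omega
  · intro k hk
    simp only [Finset.mem_Ioc] at hk
    omega
  · intro j hj
    simp only [Finset.mem_Icc] at hj
    have hnn : (0 : ℤ) ≤ (n : ℤ) + j := by omega
    rw [show (n : ℤ) + j = ((((n : ℤ) + j).toNat : ℕ) : ℤ) by omega, padicValInt.of_nat]
    simp [max_eq_left hnn]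

lemma key (l : ℕ) (hl : Odd l) (a m : ℕ) (hm : 1 ≤ m) :
    nuC (2 ^ a * l) m + (Nat.digits 2 (m - 1 + l)).sum
      = 3 * (2 ^ a * l) + (Nat.digits 2 (m - 1)).sum := by
  have hl0 : l ≠ 0 := by rintro rfl; simp [Nat.odd_iff] at hl
  have hnd : ¬ (2 ∣ l) := by rw [Nat.odd_iff] at hl; omega
  have hv : padicValNat 2 (2 ^ a * l) = a := by
    rw [padicValNat.mul (pow_ne_zero a (by norm_num)) hl0, padicValNat.prime_pow,
      padicValNat.eq_zero_of_not_dvd hnd]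
    omega
  set L := 2 ^ a * l with hLdef
  have hcast : ((L : ℤ) + ((m : ℤ) - 1) * 2 ^ (1 + a))
      = ((L + (m - 1) * 2 ^ (1 + a) : ℕ) : ℤ) := by
    push_cast [Nat.cast_sub hm]
    ring
  have hLle : L ≤ L + (m - 1) * 2 ^ (1 + a) := by omega
  have hsum := sumIcc (L + (m - 1) * 2 ^ (1 + a)) L hLle
  have hN0 : L + (m - 1) * 2 ^ (1 + a) - L = (m - 1) * 2 ^ (1 + a) := by omega
  have hNuC : nuC L m = L + ∑ k ∈ Ioc ((m - 1) * 2 ^ (1 + a))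
      (L + (m - 1) * 2 ^ (1 + a) + L), padicValNat 2 k := by
    rw [nuC, nuA, hv, hcast, hsum, hN0]
  have hI := sum_Ioc ((m - 1) * 2 ^ (1 + a)) (L + (m - 1) * 2 ^ (1 + a) + L) (by omega)
  have e0 := nu_fact ((m - 1) * 2 ^ (1 + a))
  have e1 := nu_fact (L + (m - 1) * 2 ^ (1 + a) + L)
  have d0 : (Nat.digits 2 ((m - 1) * 2 ^ (1 + a))).sum = (Nat.digits 2 (m - 1)).sum := by
    rw [mul_comm, s2_pow_mul]
  have d1 : (Nat.digits 2 (L + (m - 1) * 2 ^ (1 + a) + L)).sum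
      = (Nat.digits 2 (m - 1 + l)).sum := by
    rw [show L + (m - 1) * 2 ^ (1 + a) + L = 2 ^ (1 + a) * (m - 1 + l) by
      rw [hLdef]; ring]
    exact s2_pow_mul _ _
  rw [hNuC]
  omega

theorem nuC_odd_part (l : ℕ) (hl : Odd l) (a m : ℕ) (hm : 1 ≤ m) :
    nuC (2 ^ a * l) m = nuC l m + 3 * l * (2 ^ a - 1) := by
  have h1 := key l hl a m hm
  have h2 := key l hl 0 m hm
  rw [pow_zero, one_mul] at h2
  obtain ⟨s, hs⟩ : ∃ s, 2 ^ a = s + 1 := ⟨2 ^ a - 1, by have := Nat.one_le_two_pow (n := a); omega⟩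
  rw [hs] at h1 ⊢
  simp only [Nat.add_sub_cancel]
  have h3 : (s + 1) * l = s * l + l := by ring
  have h4 : 3 * l * s = 3 * (s * l) := by ring
  omega
end

section
/- For all positive integers l and m, ν₂(C_{2l,m}) = ν₂(C_{l,m}) + 3l, where C_{l,m} = A_{l, l + (m−1)·2^{1+ν₂(l)}}. -/
open Finset

lemma padicValInt_two_mul {x : ℤ} (hx : x ≠ 0) :
    padicValInt 2 (2 * x) = padicValInt 2 x + 1 := by
  rw [mul_comm, show (2 : ℤ) = ((2 : ℕ) : ℤ) by norm_num,
    padicValInt_mul_eq_succ x hx]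

lemma nuA_double (l : ℕ) (n : ℤ) (hn : (l : ℤ) ≤ n) :
    nuA (2 * l) (2 * n) = nuA l n + 3 * l := by
  classical
  set s : Finset ℤ := Finset.Icc (-(l : ℤ) + 1) (l : ℤ)
  have hE : Function.Injective (fun k : ℤ => 2 * k) := fun a b h => by simp only at h; omega
  have hO : Function.Injective (fun k : ℤ => 2 * k - 1) := fun a b h => by simp only at h; omega
  have hunion :
      Finset.Icc (-(2 * l : ℕ) + 1 : ℤ) ((2 * l : ℕ) : ℤ)
        = s.image (fun k : ℤ => 2 * k) ∪ s.image (fun k : ℤ => 2 * k - 1) := by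
    ext x
    simp only [Finset.mem_union, Finset.mem_image, Finset.mem_Icc, s]
    constructor
    · rintro ⟨h1, h2⟩
      rcases Int.even_or_odd x with ⟨k, hk⟩ | ⟨k, hk⟩
      · exact Or.inl ⟨k, by omega, by omega⟩
      · exact Or.inr ⟨k + 1, by omega, by omega⟩
    · rintro (⟨k, hk, rfl⟩ | ⟨k, hk, rfl⟩) <;> push_cast <;> omega
  have hdisj : Disjoint (s.image (fun k : ℤ => 2 * k)) (s.image (fun k : ℤ => 2 * k - 1)) := by
    rw [Finset.disjoint_left]
    rintro x hx hx'
    simp only [Finset.mem_image] at hx hx'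
    obtain ⟨a, -, ha⟩ := hx
    obtain ⟨b, -, hb⟩ := hx'
    omega
  have hOdd : ∀ k ∈ s, padicValInt 2 (2 * n + (2 * k - 1)) = 0 := by
    intro k _
    apply padicValInt.eq_zero_of_not_dvd
    omega
  have hEven : ∀ k ∈ s, padicValInt 2 (2 * n + 2 * k) = padicValInt 2 (n + k) + 1 := by
    intro k hk
    simp only [Finset.mem_Icc, s] at hk
    have hne : n + k ≠ 0 := by omega
    rw [show 2 * n + 2 * k = 2 * (n + k) by ring, padicValInt_two_mul hne]
  have hcard : s.card = 2 * l := by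
    simp only [s, Int.card_Icc]
    omega
  unfold nuA
  rw [hunion, Finset.sum_union hdisj, Finset.sum_image (fun a _ b _ h => hE h),
    Finset.sum_image (fun a _ b _ h => hO h),
    Finset.sum_congr rfl hOdd, Finset.sum_congr rfl hEven,
    Finset.sum_add_distrib]
  simp [hcard]
  ring

theorem nuC_double (l m : ℕ) (hl : 1 ≤ l) (hm : 1 ≤ m) :
    nuC (2 * l) m = nuC l m + 3 * l := by
  have hv : padicValNat 2 (2 * l) = 1 + padicValNat 2 l := by
    rw [padicValNat.mul (by norm_num) (by omega), padicValNat.self (by norm_num)]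
  have hn : ((2 * l : ℕ) : ℤ) + ((m : ℤ) - 1) * 2 ^ (1 + padicValNat 2 (2 * l))
      = 2 * ((l : ℤ) + ((m : ℤ) - 1) * 2 ^ (1 + padicValNat 2 l)) := by
    rw [hv]
    push_cast
    ring
  have hge : (l : ℤ) ≤ (l : ℤ) + ((m : ℤ) - 1) * 2 ^ (1 + padicValNat 2 l) := by
    have h1 : (1 : ℤ) ≤ (m : ℤ) := by exact_mod_cast hm
    have h2 : (0 : ℤ) ≤ ((m : ℤ) - 1) * 2 ^ (1 + padicValNat 2 l) :=
      mul_nonneg (by omega) (by positivity)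
    omega
  unfold nuC
  rw [hn, nuA_double l _ hge]
end
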